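/- Let d ≥ 1 and 𝕋^d = (ℝ/ℤ)^d. Call a map g : 𝕋^d → 𝕋^d a rational signed-permutation affine map if there exist a permutation σ of {1,…,d}, signs ε ∈ {−1,+1}^d, and a torsion element v ∈ 𝕋^d (i.e., N·v = 0 for some integer N ≥ 1) such that g(x)_i = ε_i x_{σ(i)} + v_i for all x. Let g₁, …, g_n be rational signed-permutation affine maps of 𝕋^d and let T : 𝕋^d → 𝕋^d be any map such that for every x ∈ 𝕋^d there exists an index i with T x = g_i x. Then T is weakly periodic in the following sense: there exists an integer M (depending only on g₁,…,g_n) such that for every x ∈ 𝕋^d the orbit {T^k x : k ∈ ℕ} has at most M elements. -/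

import Mathlib

/-- The `d`-dimensional torus `(ℝ/ℤ)^d`. -/
abbrev Torus (d : ℕ) := Fin d → AddCircle (1 : ℝ)

/-- A rational signed-permutation affine map of the torus:
`g(x)_i = ε_i x_{σ(i)} + v_i` with `σ` a permutation, `ε_i = ±1`,
and `v` a torsion element of the torus. -/
def IsRatSignedPermAffine {d : ℕ} (g : Torus d → Torus d) : Prop :=
  ∃ (σ : Equiv.Perm (Fin d)) (ε : Fin d → ℤ) (v : Torus d),
    (∀ i, ε i = 1 ∨ ε i = -1) ∧ (∃ N : ℕ, 1 ≤ N ∧ N • v = 0) ∧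
    ∀ (x : Torus d) (i : Fin d), g x i = ε i • x (σ i) + v i

/-- A piecewise map built from rational signed-permutation affine maps of the torus is
weakly periodic: all its orbits have cardinality bounded by a constant `M` depending
only on the generating maps. -/
theorem weakly_periodic_of_rat_signed_perm_affine
    (d n : ℕ) (hd : 1 ≤ d)
    (g : Fin n → (Torus d → Torus d))
    (hg : ∀ i, IsRatSignedPermAffine (g i)) :
    ∃ M : ℕ, ∀ T : Torus d → Torus d, (∀ x : Torus d, ∃ i : Fin n, T x = g i x) →
      ∀ x : Torus d, (Set.range fun k : ℕ => T^[k] x).Finite ∧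
        (Set.range fun k : ℕ => T^[k] x).ncard ≤ M := by
  classical
  choose σ ε v hε hN hgdef using hg
  choose N hN1 hNv using hN
  -- a common torsion exponent
  set N₀ : ℕ := ∏ i, N i with hN₀def
  have hN₀pos : 0 < N₀ := Finset.prod_pos (fun i _ => hN1 i)
  have hvN₀ : ∀ i, N₀ • v i = 0 := by
    intro i
    obtain ⟨c, hc⟩ := Finset.dvd_prod_of_mem N (Finset.mem_univ i)
    rw [hN₀def, hc, mul_comm, mul_smul, hNv, smul_zero]
  -- signs as units
  have hunit : ∀ i j, ∃ e : ℤˣ, (e : ℤ) = ε i j := by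
    intro i j
    rcases hε i j with h | h
    · exact ⟨1, h.symm⟩
    · exact ⟨-1, by simp [h]⟩
  choose u hu using hunit
  -- the N₀-torsion subgroup of the circle is finite
  have htf : ({y : AddCircle (1 : ℝ) | N₀ • y = 0}).Finite := by
    have hsub : {y : AddCircle (1 : ℝ) | N₀ • y = 0} ⊆
        ⋃ m ∈ N₀.divisors, {y : AddCircle (1 : ℝ) | addOrderOf y = m} := by
      intro y hy
      simp only [Set.mem_iUnion, Set.mem_setOf_eq]
      refine ⟨addOrderOf y, Nat.mem_divisors.2 ⟨addOrderOf_dvd_of_nsmul_eq_zero hy, hN₀pos.ne'⟩, rfl⟩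
    refine Set.Finite.subset ?_ hsub
    refine Set.Finite.biUnion (s := (N₀.divisors : Set ℕ)) (Finset.finite_toSet _) (fun m hm => ?_)
    exact AddCircle.finite_setOfPred_addOrderOf_eq (p := (1:ℝ)) (Nat.pos_of_mem_divisors hm)
  -- torsion subgroup of the torus is finite
  haveI : Finite {y : AddCircle (1 : ℝ) // N₀ • y = 0} := htf.to_subtype
  haveI hWfin : Finite {w : Torus d // N₀ • w = 0} := by
    refine Finite.of_injective
      (fun w => (fun j => (⟨w.1 j, congrFun w.2 j⟩ : {y : AddCircle (1 : ℝ) // N₀ • y = 0}))) ?_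
    intro w w' h
    ext j
    exact congrArg Subtype.val (congrFun h j)
  -- parameter space for all possible composite maps
  let P := Equiv.Perm (Fin d) × (Fin d → ℤˣ) × {w : Torus d // N₀ • w = 0}
  haveI : Finite P := by infer_instance
  let F : P → Torus d → Torus d := fun p x j => (p.2.1 j : ℤ) • x (p.1 j) + (p.2.2 : Torus d) j
  refine ⟨Nat.card P, fun T hT x => ?_⟩
  have key : ∀ k : ℕ, ∃ p : P, T^[k] x = F p x := by
    intro k
    induction k with
    | zero =>
      refine ⟨⟨1, 1, ⟨0, smul_zero _⟩⟩, ?_⟩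
      funext j
      simp [F]
    | succ k ih =>
      obtain ⟨p, hp⟩ := ih
      obtain ⟨i, hi⟩ := hT (T^[k] x)
      refine ⟨⟨(σ i).trans p.1, fun j => u i j * p.2.1 (σ i j),
        ⟨fun j => (u i j : ℤ) • (p.2.2 : Torus d) (σ i j) + v i j, ?_⟩⟩, ?_⟩
      · funext j
        have h1 : N₀ • (p.2.2 : Torus d) (σ i j) = 0 := congrFun p.2.2.2 (σ i j)
        have h2 : N₀ • v i j = 0 := congrFun (hvN₀ i) j
        show N₀ • ((u i j : ℤ) • (p.2.2 : Torus d) (σ i j) + v i j) = 0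
        rw [smul_add, smul_comm, h1, smul_zero, zero_add]
        exact h2
      · rw [Function.iterate_succ_apply', hi, hp]
        funext j
        rw [hgdef i (F p x) j]
        show ε i j • ((p.2.1 (σ i j) : ℤ) • x (p.1 (σ i j)) + (p.2.2 : Torus d) (σ i j)) + v i j
          = ((u i j * p.2.1 (σ i j) : ℤˣ) : ℤ) • x (p.1 (σ i j))
            + ((u i j : ℤ) • (p.2.2 : Torus d) (σ i j) + v i j)
        rw [← hu i j, smul_add, Units.val_mul, mul_smul, add_assoc]
  have hsub : (Set.range fun k : ℕ => T^[k] x) ⊆ Set.range (fun p : P => F p x) := by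
    rintro y ⟨k, rfl⟩
    obtain ⟨p, hp⟩ := key k
    exact ⟨p, hp.symm⟩
  have hfin : (Set.range (fun p : P => F p x)).Finite := Set.finite_range _
  refine ⟨hfin.subset hsub, ?_⟩
  calc (Set.range fun k : ℕ => T^[k] x).ncard ≤ (Set.range (fun p : P => F p x)).ncard :=
        Set.ncard_le_ncard hsub hfin
    _ ≤ Nat.card P := by
        rw [← Set.ncard_univ P, ← Set.image_univ]
        exact Set.ncard_image_le Set.finite_univ
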